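/- Let D be a club subset of [0,ω₁) and let P_D = S_D ∘ R_D, where R_D is restriction to D and S_D is composition with π_D(α) = min(D ∩ [α,ω₁)). Then P_D is a contractive linear projection on C₀[0,ω₁) whose kernel is {f ∈ C₀[0,ω₁) : f(α) = 0 for all α ∈ D}. -/

import Mathlib

open Set
open scoped ZeroAtInfty

noncomputable section

/-- The first uncountable ordinal ω₁. -/
def omega1 : Ordinal := (Cardinal.aleph 1).ord

/-- The space [0,ω₁) of countable ordinals, with the order topology. -/
abbrev Omega1 : Type _ := ↥(Set.Iio omega1)

/-- A subset of [0,ω₁) is club if it is closed in the order topology and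
unbounded (cofinal). -/
def IsClubSubset (D : Set Omega1) : Prop :=
  IsClosed D ∧ ∀ α : Omega1, ∃ β ∈ D, α ≤ β

lemma omega1_isLimit : Order.IsSuccLimit omega1 := Cardinal.isSuccLimit_ord (Cardinal.aleph0_le_aleph 1)
instance : Inhabited Omega1 := ⟨⟨0, omega1_isLimit.pos⟩⟩
def osucc (a : Omega1) : Omega1 := ⟨(a : Ordinal) + 1, by
  have := omega1_isLimit.succ_lt a.2
  rwa [Ordinal.add_one_eq_succ]⟩
lemma lt_osucc_iff {a b : Omega1} : a < osucc b ↔ a ≤ b := by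
  rw [← Subtype.coe_lt_coe, ← Subtype.coe_le_coe]
  show (a:Ordinal) < b + 1 ↔ _
  rw [Ordinal.add_one_eq_succ, Order.lt_succ_iff]

variable {D : Set Omega1} {π : Omega1 → Omega1}

lemma pi_continuous (hD : IsClubSubset D)
    (hπ : ∀ α : Omega1, π α ∈ D ∧ α ≤ π α ∧ ∀ β ∈ D, α ≤ β → π α ≤ β) :
    Continuous π := by
  have key : ∀ s ∈ {s : Set Omega1 | ∃ a, s = Ioi a ∨ s = Iio a}, IsOpen (π ⁻¹' s) := by
    rintro s ⟨b, rfl | rfl⟩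
    · -- preimage of Ioi b
      by_cases hS : (D ∩ Iic b).Nonempty
      · set c : Omega1 := sSup (D ∩ Iic b) with hc
        have hbdd : BddAbove (D ∩ Iic b) := ⟨b, fun x hx => hx.2⟩
        have hlub : IsLUB (D ∩ Iic b) c := isLUB_csSup hS hbdd
        have hcD : c ∈ D := hD.1.closure_subset_iff.mpr inter_subset_left
          (hlub.mem_closure hS)
        have hcb : c ≤ b := csSup_le hS (fun x hx => hx.2)
        have : π ⁻¹' Ioi b = Ioi c := by
          ext α
          simp only [mem_preimage, mem_Ioi]
          constructor
          · intro h
            by_contra hlt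
            push_neg at hlt
            exact absurd (((hπ α).2.2 c hcD hlt).trans hcb) (not_le.mpr h)
          · intro h
            by_contra hle
            push_neg at hle
            have hmem : π α ∈ D ∩ Iic b := ⟨(hπ α).1, hle⟩
            exact absurd (h.trans_le (hπ α).2.1) (le_csSup hbdd hmem).not_gt
        rw [this]; exact isOpen_Ioi
      · have : π ⁻¹' Ioi b = univ := by
          ext α
          simp only [mem_preimage, mem_Ioi, mem_univ, iff_true]
          by_contra hle
          push_neg at hle
          exact hS ⟨π α, (hπ α).1, hle⟩
        rw [this]; exact isOpen_univ
    · -- preimage of Iio b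
      by_cases hS : (D ∩ Iio b).Nonempty
      · set s : Omega1 := sSup (D ∩ Iio b) with hs
        have hbdd : BddAbove (D ∩ Iio b) := ⟨b, fun x hx => hx.2.le⟩
        have hlub : IsLUB (D ∩ Iio b) s := isLUB_csSup hS hbdd
        have hsD : s ∈ D := hD.1.closure_subset_iff.mpr inter_subset_left
          (hlub.mem_closure hS)
        have hsb : s ≤ b := csSup_le hS (fun x hx => hx.2.le)
        rcases lt_or_eq_of_le hsb with hsb' | hsb'
        · have : π ⁻¹' Iio b = Iio (osucc s) := by
            ext α
            simp only [mem_preimage, mem_Iio, lt_osucc_iff]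
            constructor
            · intro h
              have : π α ∈ D ∩ Iio b := ⟨(hπ α).1, h⟩
              exact (hπ α).2.1.trans (le_csSup hbdd this)
            · intro h
              exact ((hπ α).2.2 s hsD h).trans_lt hsb'
          rw [this]; exact isOpen_Iio
        · have : π ⁻¹' Iio b = Iio b := by
            ext α
            simp only [mem_preimage, mem_Iio]
            constructor
            · intro h; exact (hπ α).2.1.trans_lt h
            · intro h
              rw [hsb'] at hlub
              obtain ⟨d, hd, hαd⟩ := exists_lt_of_lt_csSup hS (hsb' ▸ h)
              exact ((hπ α).2.2 d hd.1 hαd.le).trans_lt hd.2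
          rw [this]; exact isOpen_Iio
      · have : π ⁻¹' Iio b = ∅ := by
          ext α
          simp only [mem_preimage, mem_Iio, mem_empty_iff_false, iff_false]
          intro h
          exact hS ⟨π α, (hπ α).1, h⟩
        rw [this]; exact isOpen_empty
  have := OrderTopology.topology_eq_generate_intervals (α := Omega1)
  rw [continuous_def]
  intro s hs
  rw [this] at hs
  induction hs with
  | basic u hu => exact key u hu
  | univ => exact isOpen_univ
  | inter u v _ _ hu hv => exact hu.inter hv
  | sUnion S _ hS =>
    rw [preimage_sUnion]
    exact isOpen_biUnion fun t ht => hS t ht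

open scoped ZeroAtInfty

lemma pi_fixed (hπ : ∀ α : Omega1, π α ∈ D ∧ α ≤ π α ∧ ∀ β ∈ D, α ≤ β → π α ≤ β)
    {α : Omega1} (hα : α ∈ D) : π α = α :=
  le_antisymm ((hπ α).2.2 α hα le_rfl) (hπ α).2.1

lemma comp_zero_at_infty (hD : IsClubSubset D)
    (hπ : ∀ α : Omega1, π α ∈ D ∧ α ≤ π α ∧ ∀ β ∈ D, α ≤ β → π α ≤ β)
    (f : C₀(Omega1, ℝ)) :
    Filter.Tendsto (fun α => f (π α)) (Filter.cocompact Omega1) (nhds 0) := by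
  rw [Metric.tendsto_nhds]
  intro ε hε
  have hf := Metric.tendsto_nhds.mp (zero_at_infty f) ε hε
  rw [Filter.eventually_iff, Filter.mem_cocompact] at hf ⊢
  obtain ⟨K, hK, hKs⟩ := hf
  have hbdd : BddAbove K := hK.bddAbove
  obtain ⟨β, hβ⟩ := hbdd
  refine ⟨Iic β, ?_, ?_⟩
  · have : Iic β = Icc default β := by
      ext x
      simp only [mem_Iic, mem_Icc, iff_and_self]
      intro _
      exact Subtype.mk_le_mk.mpr (zero_le (a := _))
    rw [this]
    exact isCompact_Icc
  · intro x hx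
    simp only [mem_compl_iff, mem_Iic, not_le] at hx
    have : π x ∉ K := fun hmem => (hβ hmem).not_gt (hx.trans_le (hπ x).2.1)
    exact hKs this

theorem PD_contractive_projection' {D : Set Omega1} (hD : IsClubSubset D)
    (π : Omega1 → Omega1)
    (hπ : ∀ α : Omega1, π α ∈ D ∧ α ≤ π α ∧ ∀ β ∈ D, α ≤ β → π α ≤ β) :
    ∃ P : C₀(Omega1, ℝ) →L[ℝ] C₀(Omega1, ℝ),
      (∀ (f : C₀(Omega1, ℝ)) (α : Omega1), P f α = f (π α)) ∧
      ‖P‖ ≤ 1 ∧ P.comp P = P ∧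
      (∀ f : C₀(Omega1, ℝ), P f = 0 ↔ ∀ α ∈ D, f α = 0) := by
  have hcont : Continuous π := pi_continuous hD hπ
  let Pf : C₀(Omega1, ℝ) → C₀(Omega1, ℝ) := fun f =>
    { toFun := fun α => f (π α)
      continuous_toFun := f.continuous.comp hcont
      zero_at_infty' := comp_zero_at_infty hD hπ f }
  have hPf : ∀ f α, Pf f α = f (π α) := fun _ _ => rfl
  let L : C₀(Omega1, ℝ) →ₗ[ℝ] C₀(Omega1, ℝ) :=
    { toFun := Pf
      map_add' := fun f g => by ext α; simp [hPf]
      map_smul' := fun c f => by ext α; simp [hPf] }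
  have hbound : ∀ f : C₀(Omega1, ℝ), ‖L f‖ ≤ 1 * ‖f‖ := by
    intro f
    rw [one_mul, ← ZeroAtInftyContinuousMap.norm_toBCF_eq_norm,
      ← ZeroAtInftyContinuousMap.norm_toBCF_eq_norm]
    refine (BoundedContinuousFunction.norm_le (norm_nonneg _)).mpr fun x => ?_
    exact f.toBCF.norm_coe_le_norm (π x)
  refine ⟨L.mkContinuous 1 hbound, fun f α => rfl, L.mkContinuous_norm_le zero_le_one hbound,
    ?_, ?_⟩
  · ext f α
    show f (π (π α)) = f (π α)
    rw [pi_fixed hπ (hπ α).1]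
  · intro f
    constructor
    · intro h α hα
      have h2 : f (π α) = 0 := DFunLike.congr_fun h α
      rwa [pi_fixed hπ hα] at h2
    · intro h
      ext α
      exact h (π α) (hπ α).1


/-- For a club subset D of [0,ω₁) and π_D(α) = min(D ∩ [α,ω₁)), the operator
P_D = S_D ∘ R_D, i.e. (P_D f)(α) = f(π_D α), is a well-defined contractive
linear projection on C₀[0,ω₁) with kernel {f : f(α) = 0 for all α ∈ D}. -/
theorem PD_contractive_projection {D : Set Omega1} (hD : IsClubSubset D)
    (π : Omega1 → Omega1)
    (hπ : ∀ α : Omega1, π α ∈ D ∧ α ≤ π α ∧ ∀ β ∈ D, α ≤ β → π α ≤ β) :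
    ∃ P : C₀(Omega1, ℝ) →L[ℝ] C₀(Omega1, ℝ),
      (∀ (f : C₀(Omega1, ℝ)) (α : Omega1), P f α = f (π α)) ∧
      ‖P‖ ≤ 1 ∧ P.comp P = P ∧
      (∀ f : C₀(Omega1, ℝ), P f = 0 ↔ ∀ α ∈ D, f α = 0) :=
  PD_contractive_projection' hD π hπ

end
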